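/- If R is an integrally closed subring of its field of fractions K and a ∈ K does not belong to R, then a does not belong to the subring R[a⁻¹] generated by R and a⁻¹, and a⁻¹ is a nonunit of R[a⁻¹]. -/

import Mathlib

lemma reflect_natDegree_le {R : Type*} [Semiring R] (N : ℕ) (f : Polynomial R)
    (hf : f.natDegree ≤ N) : (Polynomial.reflect N f).natDegree ≤ N := by
  rw [Polynomial.natDegree_le_iff_coeff_eq_zero]
  intro i hi
  rw [Polynomial.coeff_reflect, Polynomial.revAt_eq_self_of_lt hi]
  exact Polynomial.coeff_eq_zero_of_natDegree_lt (lt_of_le_of_lt hf hi)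

lemma key_integral (K : Type) [Field K] (R : Subring K) (a : K) (ha : a ≠ 0)
    (hmem : a ∈ Algebra.adjoin R ({a⁻¹} : Set K)) : IsIntegral R a := by
  rw [Algebra.adjoin_singleton_eq_range_aeval] at hmem
  obtain ⟨p, hp⟩ := hmem
  letI : Invertible (a⁻¹ : K) := invertibleOfNonzero (inv_ne_zero ha)
  have hinv : (⅟(a⁻¹) : K) = a := inv_inv a
  have h := Polynomial.eval₂_reflect_mul_pow (algebraMap R K) a⁻¹ p.natDegree p le_rfl
  rw [hinv] at h
  refine ⟨Polynomial.X ^ (p.natDegree + 1) - Polynomial.reflect p.natDegree p, ?_, ?_⟩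
  · refine Polynomial.monic_X_pow_sub ?_
    calc (Polynomial.reflect p.natDegree p).degree ≤ (p.natDegree : WithBot ℕ) :=
          Polynomial.degree_le_of_natDegree_le (reflect_natDegree_le _ _ le_rfl)
      _ < ((p.natDegree + 1 : ℕ) : WithBot ℕ) := by exact_mod_cast Nat.lt_succ_self _
  · have haev : (Polynomial.aeval a) (Polynomial.reflect p.natDegree p) = a ^ (p.natDegree + 1) := by
      have hp' : Polynomial.eval₂ (algebraMap R K) a⁻¹ p = a := hp
      rw [hp'] at h
      have : (Polynomial.aeval a) (Polynomial.reflect p.natDegree p) * (a⁻¹) ^ p.natDegree = a := h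
      field_simp at this
      rw [pow_succ']
      have hx : a ^ p.natDegree * (1 / a) ^ p.natDegree = 1 := by
        rw [← mul_pow, mul_one_div_cancel ha, one_pow]
      linear_combination a ^ p.natDegree * this - (Polynomial.aeval a) (Polynomial.reflect p.natDegree p) * hx
    have haev' : Polynomial.eval₂ (algebraMap R K) a (Polynomial.reflect p.natDegree p)
        = a ^ (p.natDegree + 1) := haev
    simp [Polynomial.eval₂_sub, haev']

/-- If R is integrally closed in its fraction field K and a ∈ K,
a ≠ 0, a ∉ R, then a ∉ R[a⁻¹] and a⁻¹ is a nonunit of R[a⁻¹]. -/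
theorem stmt_7 (K : Type) [Field K] (R : Subring K)
    (hfrac : ∀ x : K, ∃ a ∈ R, ∃ b ∈ R, b ≠ 0 ∧ x = a / b)
    (hic : ∀ x : K, IsIntegral R x → x ∈ R)
    (a : K) (ha : a ≠ 0) (haR : a ∉ R) :
    a ∉ Algebra.adjoin R ({a⁻¹} : Set K) ∧
    ¬ IsUnit (⟨a⁻¹, Algebra.self_mem_adjoin_singleton R a⁻¹⟩ :
        Algebra.adjoin R ({a⁻¹} : Set K)) := by
  have hmain : a ∉ Algebra.adjoin R ({a⁻¹} : Set K) := fun hmem =>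
    haR (hic a (key_integral K R a ha hmem))
  refine ⟨hmain, fun hu => ?_⟩
  obtain ⟨u, hu⟩ := hu
  apply hmain
  set b := ((u⁻¹ : (Algebra.adjoin R ({a⁻¹} : Set K))ˣ) : Algebra.adjoin R ({a⁻¹} : Set K))
  have h1 : b * u = 1 := u.inv_mul
  have h2 : (b : K) * a⁻¹ = 1 := by
    have := congrArg (Subtype.val) h1
    rw [hu] at this
    simpa using this
  have h3 : (b : K) = a := by
    field_simp at h2
    exact h2
  have hb := b.2
  rwa [h3] at hb
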